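/- Let n, N, m be positive integers with n + 1 ≤ N, and let Δ ∈ ℝ^m be such that for every positive integer k there exists an index i with Int.fract(k·Δ_i/(2N)) ∈ [0, n/N]. Suppose the group R = {a ∈ ℤ^m : a_1·Δ_1 + … + a_m·Δ_m ∈ 2N·ℤ} is generated by a single vector, i.e., R = ℤ·a₀ for some a₀ ∈ ℤ^m with at least one strictly positive component. Then the numbers Δ_1, …, Δ_m are pairwise distinct modulo 2N: for all i ≠ j, Δ_i − Δ_j ∉ 2N·ℤ. -/

import Mathlib

open Finset

noncomputable def ee (t : ℝ) : ℂ := Complex.exp (2 * Real.pi * Complex.I * t)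

lemma ee_add (s t : ℝ) : ee (s + t) = ee s * ee t := by
  rw [ee, ee, ee, ← Complex.exp_add]; congr 1; push_cast; ring

lemma ee_zero : ee 0 = 1 := by simp [ee]

lemma ee_mul_neg (t : ℝ) : ee t * ee (-t) = 1 := by
  rw [← ee_add, ← Complex.exp_zero, ee]; congr 1; push_cast; ring

lemma ee_ne_zero (t : ℝ) : ee t ≠ 0 := Complex.exp_ne_zero _

lemma ee_cos (t : ℝ) : ee t + ee (-t) = 2 * (Real.cos (2 * Real.pi * t) : ℂ) := by
  have key : ∀ s : ℝ, ee s = Complex.cos (2*Real.pi*s) + Complex.sin (2*Real.pi*s) * Complex.I := by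
    intro s
    rw [ee, ← Complex.exp_mul_I]
    ring_nf
  rw [key, key, Complex.ofReal_cos]
  push_cast
  rw [mul_neg, Complex.cos_neg, Complex.sin_neg]
  ring

lemma ee_nat_mul (k : ℕ) (t : ℝ) : ee (k * t) = ee t ^ k := by
  simp [ee, ← Complex.exp_nat_mul]; ring_nf

lemma norm_ee (t : ℝ) : ‖ee t‖ = 1 := by
  rw [ee, Complex.norm_exp]
  norm_num [Complex.mul_re]

lemma ee_eq_one_iff (t : ℝ) : ee t = 1 ↔ ∃ z : ℤ, t = z := by
  rw [ee, Complex.exp_eq_one_iff]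
  constructor
  · rintro ⟨n, hn⟩
    refine ⟨n, ?_⟩
    have h2 : (2 * Real.pi * Complex.I : ℂ) ≠ 0 := by
      simp [Real.pi_ne_zero, Complex.I_ne_zero]
    have := mul_left_cancel₀ h2
      (show (2 * Real.pi * Complex.I : ℂ) * t = (2 * Real.pi * Complex.I) * n by rw [hn]; ring)
    exact_mod_cast this
  · rintro ⟨z, rfl⟩
    exact ⟨z, by push_cast; ring⟩

lemma ee_sum {ι : Type*} (s : Finset ι) (f : ι → ℝ) :
    ee (∑ i ∈ s, f i) = ∏ i ∈ s, ee (f i) := by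
  classical
  induction s using Finset.cons_induction with
  | empty => simp [ee_zero]
  | cons a s ha ih => rw [Finset.sum_cons, Finset.prod_cons, ee_add, ih]

lemma expand (p : ℕ) (y : ℝ) :
    (((1 + Real.cos (2*Real.pi*y))/2 : ℝ) : ℂ) ^ p
      = (∑ j ∈ range (2*p+1), ((2*p).choose j : ℂ) * ee (((j:ℝ) - (p:ℝ)) * y)) / 4 ^ p := by
  rw [eq_div_iff (pow_ne_zero _ (by norm_num : (4:ℂ) ≠ 0))]
  apply mul_right_cancel₀ (pow_ne_zero p (ee_ne_zero y))
  have key : (((1 + Real.cos (2*Real.pi*y))/2 : ℝ) : ℂ) * (4 * ee y) = (1 + ee y)^2 := by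
    have h1 := ee_cos y
    have h2 := ee_mul_neg y
    rw [Complex.ofReal_div, Complex.ofReal_add, Complex.ofReal_one, Complex.ofReal_ofNat]
    linear_combination (-(ee y)) * h1 + h2
  calc (((1 + Real.cos (2*Real.pi*y))/2 : ℝ) : ℂ) ^ p * 4 ^ p * ee y ^ p
      = ((((1 + Real.cos (2*Real.pi*y))/2 : ℝ) : ℂ) * (4 * ee y)) ^ p := by ring
    _ = ((1 + ee y)^2) ^ p := by rw [key]
    _ = (1 + ee y) ^ (2*p) := by rw [← pow_mul]
    _ = ∑ j ∈ range (2*p+1), ee y ^ j * 1 ^ (2*p - j) * ((2*p).choose j : ℂ) := by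
          rw [add_comm]; exact add_pow (ee y) 1 (2*p)
    _ = (∑ j ∈ range (2*p+1), ((2*p).choose j : ℂ) * ee (((j:ℝ) - (p:ℝ)) * y)) * ee y ^ p := by
          rw [sum_mul]
          refine sum_congr rfl fun j hj => ?_
          have : ee (((j:ℝ) - (p:ℝ)) * y) * ee y ^ p = ee y ^ j := by
            rw [← ee_nat_mul, ← ee_add, show ((j:ℝ)-(p:ℝ))*y + (p:ℝ)*y = (j:ℝ)*y by ring,
              ee_nat_mul]
          rw [one_pow, mul_one, mul_assoc, this, mul_comm]

lemma geom_bound {c : ℂ} (hc : ‖c‖ = 1) (h1 : c ≠ 1) (K : ℕ) :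
    ‖∑ k ∈ range K, c^(k+1)‖ ≤ 2 / ‖1 - c‖ := by
  have hne : (1:ℂ) - c ≠ 0 := sub_ne_zero.mpr (Ne.symm h1)
  have habs : (0:ℝ) < ‖1 - c‖ := norm_pos_iff.mpr hne
  have hsum : ∑ k ∈ range K, c^(k+1) = c * ((c ^ K - 1) / (c - 1)) := by
    rw [← geom_sum_eq h1 K, mul_sum]
    exact sum_congr rfl fun k _ => pow_succ' c k
  rw [hsum, norm_mul, norm_div, hc, one_mul,
    show c - 1 = -(1-c) by ring, norm_neg]
  have h2 : ‖c ^ K - 1‖ ≤ 2 := by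
    calc ‖c ^ K - 1‖ ≤ ‖c^K‖ + ‖(1:ℂ)‖ :=
        norm_sub_le _ _
      _ ≤ 2 := by rw [norm_pow, hc, one_pow, norm_one]; norm_num
  gcongr

lemma cos_mono {d t : ℝ} (hd : 0 < d) (h1 : d ≤ t) (h2 : t ≤ 1 - d) :
    Real.cos (2 * Real.pi * t) ≤ Real.cos (2 * Real.pi * d) := by
  have hd2 : d ≤ 1/2 := by linarith
  have pi_pos := Real.pi_pos
  rcases le_total t (1/2) with ht | ht
  · apply Real.cos_le_cos_of_nonneg_of_le_pi (by positivity) (by nlinarith) (by nlinarith)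
  · have : Real.cos (2*Real.pi*t) = Real.cos (2*Real.pi*(1-t)) := by
      rw [show 2*Real.pi*(1-t) = 2*Real.pi - 2*Real.pi*t by ring, Real.cos_two_pi_sub]
    rw [this]
    apply Real.cos_le_cos_of_nonneg_of_le_pi (by positivity) (by nlinarith) (by nlinarith)

lemma factor_bound {γ y : ℝ} (hγ : γ < 1) (h2 : Int.fract y ≤ γ) :
    Real.cos (2*Real.pi*(y - (1+γ)/2)) ≤ Real.cos (2*Real.pi*((1-γ)/2)) := by
  have h0 : 0 ≤ Int.fract y := Int.fract_nonneg y
  have harg : 2*Real.pi*(y - (1+γ)/2)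
      = 2*Real.pi*(Int.fract y - (1+γ)/2) + (⌊y⌋ : ℤ) * (2*Real.pi) := by
    simp only [Int.fract]; ring
  rw [harg, Real.cos_add_int_mul_two_pi,
    show 2*Real.pi*(Int.fract y - (1+γ)/2) = -(2*Real.pi*((1+γ)/2 - Int.fract y)) by ring,
    Real.cos_neg]
  exact cos_mono (by linarith) (by linarith) (by linarith)

lemma key_lemma {m : ℕ} (θ : Fin m → ℝ) {γ : ℝ} (hγ0 : 0 ≤ γ) (hγ1 : γ < 1)
    (hres : ∀ a : Fin m → ℤ, (∃ z : ℤ, ∑ l, (a l : ℝ) * θ l = (z:ℝ)) → ∑ l, a l = 0)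
    (hbad : ∀ k : ℕ, 0 < k → ∃ l, Int.fract ((k:ℝ) * θ l) ≤ γ) : False := by
  classical
  have pi_pos := Real.pi_pos
  set β : ℝ := (1+γ)/2 with hβdef
  set q : ℝ := (1 + Real.cos (2*Real.pi*((1-γ)/2)))/2 with hqdef
  have hq0 : 0 ≤ q := by
    have := Real.neg_one_le_cos (2*Real.pi*((1-γ)/2)); rw [hqdef]; linarith
  have hq1 : q < 1 := by
    have h1 : Real.cos (2*Real.pi*((1-γ)/2)) < Real.cos 0 := by
      apply Real.cos_lt_cos_of_nonneg_of_le_pi le_rfl (by nlinarith) (by nlinarith)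
    rw [Real.cos_zero] at h1
    rw [hqdef]; linarith
  -- choose the power p
  obtain ⟨p, hp0, hp⟩ : ∃ p : ℕ, 0 < p ∧ ((2*p+1 : ℕ):ℝ)^m * q^p < 1 := by
    rcases eq_or_lt_of_le hq0 with hq | hq
    · exact ⟨1, one_pos, by rw [← hq]; norm_num⟩
    · set r := Real.sqrt q with hrdef
      have hr0 : 0 < r := Real.sqrt_pos.mpr hq
      have hr1 : r < 1 := by
        rw [hrdef, show (1:ℝ) = Real.sqrt 1 by rw [Real.sqrt_one]]
        exact Real.sqrt_lt_sqrt hq0 hq1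
      have hq_eq : ∀ pp : ℕ, q^pp = r^(2*pp) := by
        intro pp
        rw [pow_mul, hrdef, Real.sq_sqrt hq0]
      obtain ⟨M, hM⟩ := Filter.eventually_atTop.mp
        ((tendsto_pow_const_mul_const_pow_of_lt_one m hr0.le hr1).eventually (Iio_mem_nhds hr0))
      refine ⟨M + 1, Nat.succ_pos M, ?_⟩
      have hMval := hM (2*(M+1)+1) (by omega)
      have key : r * (((2*(M+1)+1 : ℕ):ℝ)^m * q^(M+1)) < r * 1 := by
        rw [hq_eq, mul_one]
        calc r * (((2*(M+1)+1 : ℕ):ℝ)^m * r^(2*(M+1)))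
            = ((2*(M+1)+1 : ℕ):ℝ)^m * r^(2*(M+1)+1) := by rw [pow_succ]; ring
          _ < r := hMval
      have := lt_of_mul_lt_mul_left key hr0.le
      linarith
  -- notation
  set P : Finset (Fin m → ℕ) := Fintype.piFinset (fun _ => range (2*p+1)) with hPdef
  set al : (Fin m → ℕ) → ℝ := fun J => ∑ l, (((J l):ℝ) - (p:ℝ)) * θ l with haldef
  set sj : (Fin m → ℕ) → ℝ := fun J => ∑ l, (((J l):ℝ) - (p:ℝ)) with hsjdef
  set cj : (Fin m → ℕ) → ℝ := fun J => ∏ l, (((2*p).choose (J l)) : ℝ) with hcjdef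
  have hcj0 : ∀ J, 0 ≤ cj J := fun J => prod_nonneg (fun l _ => by positivity)
  -- resonance consequence
  have hres2 : ∀ J, ee (al J) = 1 → sj J = 0 := by
    intro J hJ
    obtain ⟨z, hz⟩ := (ee_eq_one_iff _).mp hJ
    have h1 : ∑ l, (((fun l => (J l : ℤ) - (p:ℤ)) l : ℤ) : ℝ) * θ l = (z:ℝ) := by
      rw [← hz, haldef]
      push_cast
      rfl
    have h2 := hres _ ⟨z, h1⟩
    have h3 : sj J = ((∑ l, ((J l : ℤ) - (p:ℤ)) : ℤ) : ℝ) := by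
      rw [hsjdef]; push_cast; rfl
    rw [h3, h2, Int.cast_zero]
  -- the function g
  set g : ℕ → ℝ := fun k => ∏ l, ((1 + Real.cos (2*Real.pi*(((k:ℝ)+1) * θ l - β)))/2)^p
    with hgdef
  -- expansion of g in complex exponentials
  have hgC : ∀ k : ℕ, ((g k : ℝ) : ℂ) * 4^(p*m)
      = ∑ J ∈ P, ((cj J : ℝ) : ℂ) * (ee (-(sj J) * β) * ee (al J)^(k+1)) := by
    intro k
    have e1 : ((g k : ℝ):ℂ)
        = ∏ l, (((1 + Real.cos (2*Real.pi*(((k:ℝ)+1) * θ l - β)))/2 : ℝ) : ℂ)^p := by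
      rw [hgdef]; push_cast; rfl
    have e2 : ((g k : ℝ):ℂ)
        = (∏ l, ∑ j ∈ range (2*p+1),
            ((2*p).choose j : ℂ) * ee (((j:ℝ)-(p:ℝ)) * (((k:ℝ)+1)*θ l - β))) / (4^p)^m := by
      rw [e1,
        show (((4:ℂ)^p)^m : ℂ) = ∏ _l : Fin m, (4:ℂ)^p from by
          rw [prod_const, card_univ, Fintype.card_fin],
        ← prod_div_distrib]
      exact prod_congr rfl fun l _ => expand p _
    rw [e2, div_mul_eq_mul_div, show ((4:ℂ))^(p*m) = ((4:ℂ)^p)^m from pow_mul 4 p m,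
      mul_div_assoc, div_self (pow_ne_zero _ (pow_ne_zero _ (by norm_num : (4:ℂ) ≠ 0))), mul_one]
    rw [Finset.prod_univ_sum]
    refine sum_congr rfl fun J hJ => ?_
    -- product over l of single terms
    rw [prod_mul_distrib, ← ee_sum]
    have harg : ∑ l, (((J l):ℝ)-(p:ℝ)) * (((k:ℝ)+1)*θ l - β)
        = (((k+1:ℕ)):ℝ) * al J + (-(sj J) * β) := by
      calc ∑ l, (((J l):ℝ)-(p:ℝ)) * (((k:ℝ)+1)*θ l - β)
          = ∑ l, ( ((k:ℝ)+1) * ((((J l):ℝ)-(p:ℝ)) * θ l) - (((J l):ℝ)-(p:ℝ)) * β ) :=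
            sum_congr rfl fun l _ => by ring
        _ = ((k:ℝ)+1) * (∑ l, (((J l):ℝ)-(p:ℝ)) * θ l) - (∑ l, (((J l):ℝ)-(p:ℝ))) * β := by
            rw [sum_sub_distrib, mul_sum, sum_mul]
        _ = (((k+1:ℕ)):ℝ) * al J + (-(sj J) * β) := by
            simp only [haldef, hsjdef]
            push_cast
            ring
    rw [harg, ee_add, ee_nat_mul]
    have hcast : ((cj J : ℝ):ℂ) = ∏ l, (((2*p).choose (J l)) : ℂ) := by
      rw [hcjdef]; push_cast; rfl
    rw [hcast]
    ring
  -- central coefficient and error constant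
  set cb : ℝ := (((2*p).choose p : ℕ) : ℝ) with hcbdef
  set E : ℝ := ∑ J ∈ P.filter (fun J => ¬ (ee (al J) = 1)),
      cj J * (2 / ‖1 - ee (al J)‖) with hEdef
  have hcb_pos : (0:ℝ) < cb := by
    rw [hcbdef]
    exact_mod_cast Nat.choose_pos (by omega : p ≤ 2*p)
  -- the complex identity for partial sums
  have hmain : ∀ K : ℕ, (((∑ k ∈ range K, g k) * 4^(p*m) : ℝ) : ℂ)
      = ∑ J ∈ P, ((cj J : ℝ):ℂ) * (ee (-(sj J)*β) * ∑ k ∈ range K, ee (al J)^(k+1)) := by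
    intro K
    calc (((∑ k ∈ range K, g k) * 4^(p*m) : ℝ):ℂ)
        = ∑ k ∈ range K, ((g k : ℝ):ℂ) * 4^(p*m) := by push_cast; rw [sum_mul]
      _ = ∑ k ∈ range K, ∑ J ∈ P, ((cj J : ℝ):ℂ) * (ee (-(sj J)*β) * ee (al J)^(k+1)) :=
            sum_congr rfl fun k _ => hgC k
      _ = ∑ J ∈ P, ∑ k ∈ range K, ((cj J : ℝ):ℂ) * (ee (-(sj J)*β) * ee (al J)^(k+1)) :=
            Finset.sum_comm
      _ = ∑ J ∈ P, ((cj J : ℝ):ℂ) * (ee (-(sj J)*β) * ∑ k ∈ range K, ee (al J)^(k+1)) := by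
            refine sum_congr rfl fun J _ => ?_
            rw [mul_sum, mul_sum]
  -- lower bound
  have hlow : ∀ K : ℕ, cb^m * K - E ≤ (∑ k ∈ range K, g k) * 4^(p*m) := by
    intro K
    have hre : ((∑ k ∈ range K, g k) * 4^(p*m) : ℝ)
        = (∑ J ∈ P, ((cj J : ℝ):ℂ) * (ee (-(sj J)*β) * ∑ k ∈ range K, ee (al J)^(k+1))).re := by
      rw [← hmain K, Complex.ofReal_re]
    rw [hre, ← sum_filter_add_sum_filter_not P (fun J => ee (al J) = 1), Complex.add_re]
    have hres_part : (∑ J ∈ P.filter (fun J => ee (al J) = 1),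
        ((cj J : ℝ):ℂ) * (ee (-(sj J)*β) * ∑ k ∈ range K, ee (al J)^(k+1))).re
        = ∑ J ∈ P.filter (fun J => ee (al J) = 1), cj J * K := by
      rw [Complex.re_sum]
      refine sum_congr rfl fun J hJ => ?_
      have h1 : ee (al J) = 1 := (mem_filter.mp hJ).2
      have h2 : sj J = 0 := hres2 J h1
      rw [h2, h1]
      simp [ee_zero]
    have hcenter : cb^m * K ≤ ∑ J ∈ P.filter (fun J => ee (al J) = 1), cj J * K := by
      have hJ0mem : (fun _ : Fin m => p) ∈ P.filter (fun J => ee (al J) = 1) := by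
        rw [mem_filter]
        constructor
        · rw [hPdef, Fintype.mem_piFinset]
          exact fun l => mem_range.mpr (by omega)
        · have : al (fun _ : Fin m => p) = 0 := by
            simp [haldef]
          rw [this, ee_zero]
      have hval : cj (fun _ : Fin m => p) * K = cb^m * K := by
        rw [hcjdef, hcbdef]
        simp [prod_const, card_univ]
      calc cb^m * K = cj (fun _ : Fin m => p) * K := hval.symm
        _ ≤ ∑ J ∈ P.filter (fun J => ee (al J) = 1), cj J * K :=
            single_le_sum (fun J _ => mul_nonneg (hcj0 J) (Nat.cast_nonneg K)) hJ0mem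
    have hnonres : -E ≤ (∑ J ∈ P.filter (fun J => ¬ (ee (al J) = 1)),
        ((cj J : ℝ):ℂ) * (ee (-(sj J)*β) * ∑ k ∈ range K, ee (al J)^(k+1))).re := by
      rw [Complex.re_sum, hEdef, ← Finset.sum_neg_distrib]
      refine sum_le_sum fun J hJ => ?_
      have h1 : ¬ (ee (al J) = 1) := (mem_filter.mp hJ).2
      set w : ℂ := ((cj J : ℝ):ℂ) * (ee (-(sj J)*β) * ∑ k ∈ range K, ee (al J)^(k+1)) with hw
      have habs : ‖w‖ ≤ cj J * (2 / ‖1 - ee (al J)‖) := by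
        rw [hw, norm_mul, norm_mul, norm_ee, one_mul, Complex.norm_real, Real.norm_eq_abs,
          abs_of_nonneg (hcj0 J)]
        exact mul_le_mul_of_nonneg_left (geom_bound (norm_ee _) h1 K) (hcj0 J)
      have h3 : |w.re| ≤ ‖w‖ := Complex.abs_re_le_norm w
      have h4 : -w.re ≤ |w.re| := neg_le_abs _
      linarith
    rw [hres_part]
    linarith
  -- upper bound
  have hup : ∀ K : ℕ, (∑ k ∈ range K, g k) ≤ (K:ℝ) * q^p := by
    intro K
    have hterm : ∀ k ∈ range K, g k ≤ q^p := by
      intro k _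
      obtain ⟨l₀, hl₀⟩ := hbad (k+1) (Nat.succ_pos k)
      have hl₀' : Int.fract (((k:ℝ)+1) * θ l₀) ≤ γ := by push_cast at hl₀; exact hl₀
      have hbase0 : ∀ l, (0:ℝ) ≤ (1 + Real.cos (2*Real.pi*(((k:ℝ)+1)*θ l - β)))/2 := by
        intro l
        have := Real.neg_one_le_cos (2*Real.pi*(((k:ℝ)+1)*θ l - β))
        linarith
      have hbase1 : ∀ l, (1 + Real.cos (2*Real.pi*(((k:ℝ)+1)*θ l - β)))/2 ≤ 1 := by
        intro l
        have := Real.cos_le_one (2*Real.pi*(((k:ℝ)+1)*θ l - β))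
        linarith
      have hb₀ : (1 + Real.cos (2*Real.pi*(((k:ℝ)+1)*θ l₀ - β)))/2 ≤ q := by
        have := factor_bound hγ1 hl₀'
        rw [hqdef, hβdef]
        linarith
      calc g k = ((1 + Real.cos (2*Real.pi*(((k:ℝ)+1)*θ l₀ - β)))/2)^p
            * ∏ l ∈ univ.erase l₀, ((1 + Real.cos (2*Real.pi*(((k:ℝ)+1)*θ l - β)))/2)^p := by
            rw [hgdef]
            exact (mul_prod_erase univ _ (mem_univ l₀)).symm
        _ ≤ q^p * 1 := by
            apply mul_le_mul
            · exact pow_le_pow_left₀ (hbase0 l₀) hb₀ p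
            · exact prod_le_one (fun l _ => pow_nonneg (hbase0 l) p)
                (fun l _ => pow_le_one₀ (hbase0 l) (hbase1 l))
            · exact prod_nonneg fun l _ => pow_nonneg (hbase0 l) p
            · positivity
        _ = q^p := mul_one _
    calc ∑ k ∈ range K, g k ≤ ∑ _k ∈ range K, q^p := sum_le_sum hterm
      _ = (K:ℝ) * q^p := by rw [sum_const, card_range, nsmul_eq_mul]
  -- combine
  have hgap : 0 < cb^m - q^p * 4^(p*m) := by
    have hcbge : (4:ℝ)^p ≤ (2*p+1) * cb := by
      rw [hcbdef]
      exact_mod_cast Nat.four_pow_le_two_mul_add_one_mul_central_binom p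
    have h1 : q^p * 4^(p*m) ≤ cb^m * (((2*p+1 : ℕ):ℝ)^m * q^p) := by
      rw [pow_mul]
      calc q^p * ((4:ℝ)^p)^m ≤ q^p * (((2*p+1:ℝ)) * cb)^m := by
            apply mul_le_mul_of_nonneg_left _ (by positivity)
            exact pow_le_pow_left₀ (by positivity) hcbge m
        _ = cb^m * (((2*p+1 : ℕ):ℝ)^m * q^p) := by push_cast; rw [mul_pow]; ring
    have h2 : cb^m * (((2*p+1 : ℕ):ℝ)^m * q^p) < cb^m * 1 :=
      mul_lt_mul_of_pos_left hp (by positivity)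
    linarith
  obtain ⟨K, hK⟩ := exists_nat_gt (E / (cb^m - q^p * 4^(p*m)))
  have h1 := hlow K
  have h2 := hup K
  have h3 : (∑ k ∈ range K, g k) * 4^(p*m) ≤ (K:ℝ) * q^p * 4^(p*m) :=
    mul_le_mul_of_nonneg_right h2 (by positivity)
  have h5 : E < (K:ℝ) * (cb^m - q^p * 4^(p*m)) := by
    rw [div_lt_iff₀ hgap] at hK
    linarith
  nlinarith


/-- If the group of resonances of `Δ` modulo `2N` has rank one (generated by a
single vector with a strictly positive component), then the mean indices
`Δ_1, …, Δ_m` are pairwise distinct modulo `2N`. -/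
theorem stmt_3 (n N m : ℕ) (hn : 0 < n) (hN : n + 1 ≤ N) (hm : 0 < m)
    (Δ : Fin m → ℝ)
    (h : ∀ k : ℕ, 0 < k →
      ∃ i : Fin m, Int.fract ((k : ℝ) * Δ i / (2 * N)) ∈ Set.Icc 0 ((n : ℝ) / N))
    (a₀ : Fin m → ℤ)
    (hR : {a : Fin m → ℤ | ∃ z : ℤ, ∑ i, (a i : ℝ) * Δ i = 2 * N * z}
        = {a : Fin m → ℤ | ∃ c : ℤ, a = c • a₀})
    (hpos : ∃ i, 0 < a₀ i) :
    ∀ i j : Fin m, i ≠ j → ¬ ∃ z : ℤ, Δ i - Δ j = 2 * N * z := by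
  rintro i j hij ⟨z, hz⟩
  have hN0 : 0 < N := lt_of_lt_of_le (Nat.succ_pos n) hN
  have hNR : (0:ℝ) < N := by exact_mod_cast hN0
  -- the resonance e_i - e_j
  set b : Fin m → ℤ := Pi.single i 1 - Pi.single j 1 with hbdef
  have hbsum : ∑ l, ((b l : ℝ) * Δ l) = Δ i - Δ j := by
    simp only [hbdef, Pi.sub_apply, Pi.single_apply]
    push_cast
    simp only [sub_mul, ite_mul, one_mul, zero_mul, Finset.sum_sub_distrib]
    rw [Finset.sum_ite_eq' univ i Δ, Finset.sum_ite_eq' univ j Δ]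
    simp
  have hbmem : b ∈ {a : Fin m → ℤ | ∃ z : ℤ, ∑ l, (a l : ℝ) * Δ l = 2 * N * z} :=
    ⟨z, by rw [hbsum, hz]⟩
  rw [hR] at hbmem
  obtain ⟨c', hc'⟩ := hbmem
  have hbc : c' ≠ 0 := by
    intro h0
    have : b i = 0 := by rw [hc', h0]; simp
    simp [hbdef, Pi.single_apply, hij] at this
  have hbzero : ∑ l, b l = 0 := by
    simp [hbdef, Pi.single_apply, Finset.sum_sub_distrib]
  have ha₀ : ∑ l, a₀ l = 0 := by
    have : ∑ l, b l = c' * ∑ l, a₀ l := by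
      rw [hc']; simp [Finset.mul_sum]
    rw [hbzero] at this
    rcases mul_eq_zero.mp this.symm with h' | h'
    · exact absurd h' hbc
    · exact h'
  -- apply the key lemma with θ l = Δ l / (2N)
  have hγ1 : (n:ℝ)/N < 1 := by
    rw [div_lt_one hNR]
    exact_mod_cast lt_of_lt_of_le (Nat.lt_succ_self n) hN
  refine key_lemma (fun l => Δ l / (2*N)) (by positivity : (0:ℝ) ≤ (n:ℝ)/N) hγ1 ?_ ?_
  · rintro a ⟨z', hz'⟩
    have hmem : a ∈ {a : Fin m → ℤ | ∃ z : ℤ, ∑ l, (a l : ℝ) * Δ l = 2 * N * z} := by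
      refine ⟨z', ?_⟩
      have : ∑ l, (a l : ℝ) * (Δ l / (2*N)) = (∑ l, (a l : ℝ) * Δ l) / (2*N) := by
        rw [Finset.sum_div]
        exact Finset.sum_congr rfl fun l _ => by ring
      rw [this] at hz'
      field_simp at hz'
      linarith [hz']
    rw [hR] at hmem
    obtain ⟨c, hc⟩ := hmem
    rw [hc]
    simp [Finset.mul_sum, ← Finset.mul_sum, ha₀]
  · intro k hk
    obtain ⟨l, hl⟩ := h k hk
    exact ⟨l, by rw [show (k:ℝ) * (Δ l / (2*N)) = (k:ℝ) * Δ l / (2*N) by ring]; exact hl.2⟩
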